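/- Let S be an m-Noetherian commutative semiring, i.e., every S-subsemimodule of every finitely generated free S-semimodule S^n is finitely generated. Then for any index sets Λ and Λ', the canonical S-linear map β : (Λ → S) ⊗_S (Λ' → S) → (Λ × Λ' → S), f ⊗ f' ↦ ((λ, λ') ↦ f(λ)·f'(λ')), is injective. -/

import Mathlib

/-!
STATEMENT 4: Let `S` be an m-Noetherian commutative semiring (every
`S`-subsemimodule of `Sⁿ` is finitely generated for every `n`). Then for any
index sets `Λ`, `Λ'` the canonical `S`-linear map
`β : (Λ → S) ⊗[S] (Λ' → S) → (Λ × Λ' → S)`, `f ⊗ f' ↦ ((λ, λ') ↦ f λ · f' λ')`,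
is injective.
-/

open TensorProduct

variable (S : Type*) [CommSemiring S]

/-- The canonical map `(Λ → S) ⊗[S] (Λ' → S) →ₗ[S] (Λ × Λ' → S)` sending
`f ⊗ f'` to `(λ, λ') ↦ f λ * f' λ'`. -/
noncomputable def piTensorToFun (Λ Λ' : Type*) :
    ((Λ → S) ⊗[S] (Λ' → S)) →ₗ[S] (Λ × Λ' → S) :=
  TensorProduct.lift <| LinearMap.mk₂ S (fun f f' p => f p.1 * f' p.2)
    (fun f g f' => by funext p; simp [add_mul])
    (fun c f f' => by funext p; simp [smul_eq_mul, mul_assoc])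
    (fun f f' g' => by funext p; simp [mul_add])
    (fun c f f' => by funext p; simp [smul_eq_mul, mul_left_comm])

private theorem exists_fin_tmul {R M N : Type*} [CommSemiring R] [AddCommMonoid M]
    [AddCommMonoid N] [Module R M] [Module R N] (x : M ⊗[R] N) :
    ∃ (n : ℕ) (a : Fin n → M) (b : Fin n → N), x = ∑ i, a i ⊗ₜ[R] b i := by
  obtain ⟨P, rfl⟩ := TensorProduct.exists_finset x
  refine ⟨P.card, fun i => ((P.equivFin.symm i : P) : M × N).1,
    fun i => ((P.equivFin.symm i : P) : M × N).2, ?_⟩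
  rw [← Finset.sum_attach P (fun p => p.1 ⊗ₜ[R] p.2)]
  exact (Equiv.sum_comp P.equivFin.symm (fun p : P => (p : M × N).1 ⊗ₜ[R] (p : M × N).2)).symm

theorem piTensorToFun_injective_of_mNoetherian
    (hNoeth : ∀ (n : ℕ) (N : Submodule S (Fin n → S)), N.FG)
    (Λ Λ' : Type*) :
    Function.Injective (piTensorToFun S Λ Λ') := by
  classical
  intro t s hts
  obtain ⟨n, a, b, ht⟩ := exists_fin_tmul t
  obtain ⟨k, c, d, hs⟩ := exists_fin_tmul s
  subst ht hs
  -- pointwise version of the hypothesis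
  have hev : ∀ l l', ∑ i, a i l * b i l' = ∑ j, c j l * d j l' := by
    intro l l'
    have h := congrFun hts (l, l')
    simpa [piTensorToFun, map_sum, Finset.sum_apply] using h
  rcases isEmpty_or_nonempty Λ with hΛ | hΛ
  · have hz : ∀ (p : ℕ) (f : Fin p → Λ → S) (g : Fin p → Λ' → S),
        ∑ i, f i ⊗ₜ[S] g i = (0 : (Λ → S) ⊗[S] (Λ' → S)) := by
      intro p f g
      refine Finset.sum_eq_zero fun i _ => ?_
      have : f i = 0 := funext fun l => (hΛ.false l).elim
      rw [this, TensorProduct.zero_tmul]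
    rw [hz, hz]
  · set φ : Λ → (Fin (n + k) → S) :=
      fun l => Fin.append (fun i => a i l) (fun j => c j l) with hφ
    obtain ⟨G, hG⟩ := hNoeth (n + k) (Submodule.span S (Set.range φ))
    have hGmem : ∀ g ∈ G, g ∈ Submodule.span S (Set.range φ) := fun g hg =>
      hG ▸ Submodule.subset_span hg
    choose F hF1 hF2 using fun (g : (Fin (n+k) → S)) (hg : g ∈ G) =>
      Submodule.mem_span_finite_of_mem_span (hGmem g hg)
    set T : Finset (Fin (n+k) → S) := G.attach.biUnion (fun g => F g.1 g.2) with hT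
    have hTsub : (T : Set (Fin (n+k) → S)) ⊆ Set.range φ := by
      intro v hv
      simp only [hT, Finset.coe_biUnion, Set.mem_iUnion] at hv
      obtain ⟨g, _, hvg⟩ := hv
      exact hF1 g.1 g.2 hvg
    have hspan : Submodule.span S (Set.range φ) ≤ Submodule.span S (T : Set (Fin (n+k) → S)) := by
      rw [← hG, Submodule.span_le]
      intro g hg
      refine Submodule.span_mono ?_ (hF2 g hg)
      intro v hv
      exact Finset.mem_coe.2 (Finset.mem_biUnion.2 ⟨⟨g, hg⟩, Finset.mem_attach _ _, hv⟩)
    have hmem : ∀ l : Λ, φ l ∈ Submodule.span S (T : Set (Fin (n+k) → S)) :=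
      fun l => hspan (Submodule.subset_span (Set.mem_range_self l))
    choose r hr using fun l => (Submodule.mem_span_finset.1 (hmem l)).imp fun _ h => h.2
    choose! L hL using fun v (hv : v ∈ (T : Set (Fin (n+k) → S))) => hTsub hv
    -- key decompositions
    have ha : ∀ i : Fin n, a i = ∑ v ∈ T, (a i (L v)) • (fun l => r l v) := by
      intro i
      funext l
      have h := congrFun (hr l) (Fin.castAdd k i)
      simp only [Finset.sum_apply, Pi.smul_apply, smul_eq_mul, hφ, Fin.append_left] at h ⊢
      rw [← h]
      refine Finset.sum_congr rfl fun v hv => ?_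
      have hv' : v (Fin.castAdd k i) = a i (L v) := by
        conv_lhs => rw [← hL v (Finset.mem_coe.2 hv)]
        simp [hφ, Fin.append_left]
      rw [hv', mul_comm]
    have hc : ∀ j : Fin k, c j = ∑ v ∈ T, (c j (L v)) • (fun l => r l v) := by
      intro j
      funext l
      have h := congrFun (hr l) (Fin.natAdd n j)
      simp only [Finset.sum_apply, Pi.smul_apply, smul_eq_mul, hφ, Fin.append_right] at h ⊢
      rw [← h]
      refine Finset.sum_congr rfl fun v hv => ?_
      have hv' : v (Fin.natAdd n j) = c j (L v) := by
        conv_lhs => rw [← hL v (Finset.mem_coe.2 hv)]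
        simp [hφ, Fin.append_right]
      rw [hv', mul_comm]
    have hteq : ∑ i, a i ⊗ₜ[S] b i
        = ∑ v ∈ T, (fun l => r l v) ⊗ₜ[S] (∑ i, a i (L v) • b i) := by
      calc ∑ i, a i ⊗ₜ[S] b i
          = ∑ i, (∑ v ∈ T, (a i (L v)) • (fun l => r l v)) ⊗ₜ[S] b i := by
            refine Finset.sum_congr rfl fun i _ => ?_; rw [← ha i]
        _ = ∑ i, ∑ v ∈ T, (fun l => r l v) ⊗ₜ[S] (a i (L v) • b i) := by
            refine Finset.sum_congr rfl fun i _ => ?_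
            rw [TensorProduct.sum_tmul]
            exact Finset.sum_congr rfl fun v _ => TensorProduct.smul_tmul _ _ _
        _ = ∑ v ∈ T, ∑ i, (fun l => r l v) ⊗ₜ[S] (a i (L v) • b i) := Finset.sum_comm
        _ = ∑ v ∈ T, (fun l => r l v) ⊗ₜ[S] (∑ i, a i (L v) • b i) := by
            exact Finset.sum_congr rfl fun v _ => (TensorProduct.tmul_sum _ _ _).symm
    have hseq : ∑ j, c j ⊗ₜ[S] d j
        = ∑ v ∈ T, (fun l => r l v) ⊗ₜ[S] (∑ j, c j (L v) • d j) := by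
      calc ∑ j, c j ⊗ₜ[S] d j
          = ∑ j, (∑ v ∈ T, (c j (L v)) • (fun l => r l v)) ⊗ₜ[S] d j := by
            refine Finset.sum_congr rfl fun j _ => ?_; rw [← hc j]
        _ = ∑ j, ∑ v ∈ T, (fun l => r l v) ⊗ₜ[S] (c j (L v) • d j) := by
            refine Finset.sum_congr rfl fun j _ => ?_
            rw [TensorProduct.sum_tmul]
            exact Finset.sum_congr rfl fun v _ => TensorProduct.smul_tmul _ _ _
        _ = ∑ v ∈ T, ∑ j, (fun l => r l v) ⊗ₜ[S] (c j (L v) • d j) := Finset.sum_comm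
        _ = ∑ v ∈ T, (fun l => r l v) ⊗ₜ[S] (∑ j, c j (L v) • d j) := by
            exact Finset.sum_congr rfl fun v _ => (TensorProduct.tmul_sum _ _ _).symm
    rw [hteq, hseq]
    refine Finset.sum_congr rfl fun v _ => ?_
    congr 1
    funext l'
    simpa [Finset.sum_apply] using hev (L v) l'
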